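/- Let G be a group, H ≤ G a subgroup of finite index N, and let τ^G and τ^H denote the canonical traces on the complex group algebras ℂ[G] and ℂ[H] (τ(Σ λ_g g) = λ_e). If M is a finitely generated projective right ℂ[G]-module represented by an idempotent matrix e over ℂ[G], and M|_{ℂ[H]} is its restriction to ℂ[H] (a finitely generated projective ℂ[H]-module), then the τ^H-trace of M|_{ℂ[H]} equals N times the τ^G-trace of M. -/

import Mathlib

open MonoidAlgebra Matrix

/-- The canonical trace on a complex group algebra: the coefficient at the identity. -/
noncomputable def tau {G : Type*} [Group G] (x : MonoidAlgebra ℂ G) : ℂ := x.coeff 1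

/-- The inclusion `ℂ[H] → ℂ[G]` induced by a subgroup `H ≤ G`. -/
noncomputable def incl {G : Type*} [Group G] (H : Subgroup G) :
    MonoidAlgebra ℂ H →+* MonoidAlgebra ℂ G :=
  MonoidAlgebra.mapDomainRingHom ℂ H.subtype

/-- Restriction of scalars along `ℂ[H] → ℂ[G]`. -/
noncomputable instance moduleRes {G : Type*} [Group G] (H : Subgroup G) :
    Module (MonoidAlgebra ℂ H) (MonoidAlgebra ℂ G) :=
  Module.compHom _ (incl H)

/-- Row-multiplication by a square matrix over a ring, as a linear map of left modules. -/
noncomputable def vecMulLin {A : Type*} [Ring A] {k : ℕ} (e : Matrix (Fin k) (Fin k) A) :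
    (Fin k → A) →ₗ[A] (Fin k → A) where
  toFun v := v ᵥ* e
  map_add' x y := by
    ext j
    simp [Matrix.vecMul, dotProduct, add_mul, Finset.sum_add_distrib]
  map_smul' c x := by
    ext j
    simp [Matrix.vecMul, dotProduct, Finset.mul_sum, mul_assoc]

/-- Row-multiplication by a matrix over `ℂ[G]`, as a `ℂ[H]`-linear map (restriction of
scalars): its range is the restriction to `ℂ[H]` of the f.g. projective right `ℂ[G]`-module
determined by the idempotent matrix. -/
noncomputable def resVecMul {G : Type*} [Group G] (H : Subgroup G) {k : ℕ}
    (e : Matrix (Fin k) (Fin k) (MonoidAlgebra ℂ G)) :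
    (Fin k → MonoidAlgebra ℂ G) →ₗ[MonoidAlgebra ℂ H] (Fin k → MonoidAlgebra ℂ G) where
  toFun v := v ᵥ* e
  map_add' x y := by
    ext j
    simp [Matrix.vecMul, dotProduct, add_mul, Finset.sum_add_distrib]
  map_smul' c x := by
    funext j
    show ((fun i => incl H c * x i) ᵥ* e) j = incl H c * ((x ᵥ* e) j)
    simp [Matrix.vecMul, dotProduct, Finset.mul_sum, mul_assoc]

/-! ### Basic properties of the trace `tau` -/

lemma tau_add {G : Type*} [Group G] (x y : MonoidAlgebra ℂ G) :
    tau (x + y) = tau x + tau y := Finsupp.add_apply x.coeff y.coeff 1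

lemma tau_sum {G : Type*} [Group G] {ι : Type*} (s : Finset ι)
    (x : ι → MonoidAlgebra ℂ G) : tau (∑ i ∈ s, x i) = ∑ i ∈ s, tau (x i) :=
  (congrArg (· 1) (MonoidAlgebra.coeff_sum s x)).trans (Finsupp.finset_sum_apply s _ 1)

lemma tau_mul_comm {G : Type*} [Group G] (x y : MonoidAlgebra ℂ G) :
    tau (x * y) = tau (y * x) := by
  induction x using MonoidAlgebra.induction_linear with
  | zero => simp [tau]
  | add a b ha hb => simp [add_mul, mul_add, tau_add, ha, hb]
  | single g c =>
    induction y using MonoidAlgebra.induction_linear with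
    | zero => simp [tau]
    | add a b ha hb => simp [add_mul, mul_add, tau_add, ha, hb]
    | single g' c' =>
      show tau (MonoidAlgebra.single g c * MonoidAlgebra.single g' c') = _
      rw [MonoidAlgebra.single_mul_single, MonoidAlgebra.single_mul_single]
      classical
      unfold tau
      have key : (g * g' = 1) ↔ (g' * g = 1) := by
        constructor <;> intro h
        · rw [mul_eq_one_iff_inv_eq] at h; rw [← h, inv_mul_cancel]
        · rw [mul_eq_one_iff_inv_eq] at h; rw [← h, inv_mul_cancel]
      rw [MonoidAlgebra.coeff_single, MonoidAlgebra.coeff_single, Finsupp.single_apply, Finsupp.single_apply]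
      by_cases h : g * g' = 1
      · rw [if_pos h, if_pos (key.mp h), mul_comm]
      · rw [if_neg h, if_neg (fun h' => h (key.mpr h'))]

/-! ### Linear maps between finite free left modules and their matrices -/

section VML
variable {B : Type*} [Ring B]

/-- Row-multiplication by a rectangular matrix, as a left-linear map. -/
noncomputable def vml {ι κ : Type*} [Fintype ι] (M : Matrix ι κ B) :
    (ι → B) →ₗ[B] (κ → B) where
  toFun v := v ᵥ* M
  map_add' x y := by
    ext j
    simp [Matrix.vecMul, dotProduct, add_mul, Finset.sum_add_distrib]
  map_smul' c x := by
    ext j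
    simp [Matrix.vecMul, dotProduct, Finset.mul_sum, mul_assoc]

lemma vml_apply {ι κ : Type*} [Fintype ι] (M : Matrix ι κ B) (v : ι → B) :
    vml M v = v ᵥ* M := rfl

/-- The matrix of a left-linear map between finite free modules. -/
noncomputable def matOf {ι κ : Type*} [Fintype ι] [DecidableEq ι]
    (φ : (ι → B) →ₗ[B] (κ → B)) : Matrix ι κ B :=
  Matrix.of fun x y => φ (Pi.single x 1) y

lemma vml_matOf {ι κ : Type*} [Fintype ι] [DecidableEq ι]
    (φ : (ι → B) →ₗ[B] (κ → B)) : vml (matOf φ) = φ := by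
  apply LinearMap.ext; intro v
  have hv : v = ∑ x, v x • (Pi.single x 1 : ι → B) := by
    funext y
    rw [Finset.sum_apply]
    have : ∀ x : ι, (v x • (Pi.single x 1 : ι → B)) y = (Pi.single x (v x) : ι → B) y := by
      intro x
      by_cases h : x = y
      · subst h; simp
      · simp [Pi.single_eq_of_ne' h]
    rw [Finset.sum_congr rfl fun x _ => this x]
    simp [Pi.single_apply]
  conv_rhs => rw [hv]
  rw [map_sum]
  funext y
  rw [vml_apply, Matrix.vecMul, Finset.sum_apply]
  simp only [dotProduct, LinearMap.map_smul]
  refine Finset.sum_congr rfl fun x _ => ?_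
  rfl

lemma matOf_vml {ι κ : Type*} [Fintype ι] [DecidableEq ι]
    (M : Matrix ι κ B) : matOf (vml M) = M := by
  ext x y
  simp only [matOf, vml_apply, Matrix.of_apply, Matrix.vecMul, dotProduct]
  rw [Finset.sum_eq_single x]
  · simp
  · intro b _ hb; simp [Pi.single_eq_of_ne hb]
  · simp

lemma vml_mul {ι κ σ : Type*} [Fintype ι] [Fintype κ]
    (M : Matrix ι κ B) (N : Matrix κ σ B) :
    vml (M * N) = (vml N).comp (vml M) := by
  apply LinearMap.ext; intro v
  simp [vml_apply, Matrix.vecMul_vecMul]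

end VML

/-! ### The Hattori–Stallings trace is invariant under isomorphism of images -/

section Step2
variable {H' : Type*} [Group H']
local notation "B" => MonoidAlgebra ℂ H'

lemma trace_cyclic {ι κ : Type*} [Fintype ι] [Fintype κ]
    (a : Matrix ι κ (MonoidAlgebra ℂ H')) (b : Matrix κ ι (MonoidAlgebra ℂ H')) :
    ∑ i, tau ((a * b) i i) = ∑ j, tau ((b * a) j j) := by
  simp only [Matrix.mul_apply, tau_sum]
  rw [Finset.sum_comm]
  exact Finset.sum_congr rfl fun j _ => Finset.sum_congr rfl fun i _ => tau_mul_comm _ _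

lemma mem_range_fixed {ι : Type*} [Fintype ι] {F : Matrix ι ι (MonoidAlgebra ℂ H')}
    (hF : IsIdempotentElem F) {w : ι → MonoidAlgebra ℂ H'}
    (hw : w ∈ LinearMap.range (vml F)) : vml F w = w := by
  obtain ⟨u, rfl⟩ := hw
  show vml F (vml F u) = vml F u
  have := congrArg (fun M => vml M u) hF
  simpa [vml_mul] using this

lemma step2 {ι κ : Type*} [Fintype ι] [DecidableEq ι] [Fintype κ] [DecidableEq κ]
    (E : Matrix ι ι (MonoidAlgebra ℂ H')) (hE : IsIdempotentElem E)
    (F : Matrix κ κ (MonoidAlgebra ℂ H')) (hF : IsIdempotentElem F)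
    (φ : LinearMap.range (vml E) ≃ₗ[MonoidAlgebra ℂ H'] LinearMap.range (vml F)) :
    ∑ i, tau (E i i) = ∑ j, tau (F j j) := by
  set α : (ι → B) →ₗ[B] (κ → B) :=
    (LinearMap.range (vml F)).subtype ∘ₗ φ.toLinearMap ∘ₗ (vml E).rangeRestrict with hα
  set β : (κ → B) →ₗ[B] (ι → B) :=
    (LinearMap.range (vml E)).subtype ∘ₗ φ.symm.toLinearMap ∘ₗ (vml F).rangeRestrict with hβ
  have hβα : β.comp α = vml E := by
    apply LinearMap.ext; intro v
    have h1 : (vml F).rangeRestrict (α v) = φ ((vml E).rangeRestrict v) := by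
      apply Subtype.ext
      show vml F (α v) = ((φ ((vml E).rangeRestrict v) : LinearMap.range (vml F)) : κ → B)
      have : α v = ((φ ((vml E).rangeRestrict v) : LinearMap.range (vml F)) : κ → B) := rfl
      rw [this]
      exact mem_range_fixed hF (Subtype.mem _)
    show ((φ.symm ((vml F).rangeRestrict (α v)) : LinearMap.range (vml E)) : ι → B) = vml E v
    rw [h1, φ.symm_apply_apply]
    rfl
  have hαβ : α.comp β = vml F := by
    apply LinearMap.ext; intro w
    have h1 : (vml E).rangeRestrict (β w) = φ.symm ((vml F).rangeRestrict w) := by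
      apply Subtype.ext
      show vml E (β w) = ((φ.symm ((vml F).rangeRestrict w) : LinearMap.range (vml E)) : ι → B)
      have : β w = ((φ.symm ((vml F).rangeRestrict w) : LinearMap.range (vml E)) : ι → B) := rfl
      rw [this]
      exact mem_range_fixed hE (Subtype.mem _)
    show ((φ ((vml E).rangeRestrict (β w)) : LinearMap.range (vml F)) : κ → B) = vml F w
    rw [h1, φ.apply_symm_apply]
    rfl
  have hab : matOf α * matOf β = E := by
    have h2 : vml (matOf α * matOf β) = vml E := by
      rw [vml_mul, vml_matOf, vml_matOf, hβα]
    have h3 := congrArg matOf h2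
    rwa [matOf_vml, matOf_vml] at h3
  have hba : matOf β * matOf α = F := by
    have h2 : vml (matOf β * matOf α) = vml F := by
      rw [vml_mul, vml_matOf, vml_matOf, hαβ]
    have h3 := congrArg matOf h2
    rwa [matOf_vml, matOf_vml] at h3
  rw [← hab, ← hba, trace_cyclic]
end Step2

/-! ### `ℂ[G]` is a free `ℂ[H]`-module on the right cosets of `H` -/

section Construction
variable {G : Type*} [Group G] (H : Subgroup G)

/-- The set of right cosets of `H` in `G`. -/
abbrev Qr := Quotient (QuotientGroup.rightRel H)

/-- A choice of representatives for the right cosets. -/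
noncomputable def rep (q : Qr H) : G := q.out

lemma rep_spec (g : G) : g * (rep H ⟦g⟧)⁻¹ ∈ H := by
  rw [← QuotientGroup.rightRel_apply]
  exact Quotient.exact (Quotient.out_eq (⟦g⟧ : Qr H))

lemma rep_eq_iff {g : G} {q : Qr H} (h : g * (rep H q)⁻¹ ∈ H) : q = ⟦g⟧ := by
  rw [← Quotient.out_eq q]
  exact Quotient.sound (QuotientGroup.rightRel_apply.mpr h)

lemma rep_inj_aux (q : Qr H) : Function.Injective (fun h : H => (h : G) * rep H q) :=
  fun _ _ hab => Subtype.ext (mul_right_cancel hab)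

lemma smul_def (c : MonoidAlgebra ℂ H) (x : MonoidAlgebra ℂ G) :
    c • x = incl H c * x := rfl

lemma incl_apply (c : MonoidAlgebra ℂ H) :
    (incl H c : MonoidAlgebra ℂ G).coeff = Finsupp.mapDomain (H.subtype) c.coeff := rfl

/-- The `ℂ[H]`-coordinate of `x : ℂ[G]` along the right coset `q`. -/
noncomputable def coord (q : Qr H) (x : MonoidAlgebra ℂ G) : MonoidAlgebra ℂ H :=
  MonoidAlgebra.ofCoeff (Finsupp.comapDomain (fun h : H => (h : G) * rep H q) x.coeff ((rep_inj_aux H q).injOn))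

lemma coord_apply (q : Qr H) (x : MonoidAlgebra ℂ G) (h : H) :
    (coord H q x).coeff h = x.coeff ((h : G) * rep H q) := rfl

/-- Reassembling an element of `ℂ[G]` from its coordinates, as a `ℂ[H]`-linear map. -/
noncomputable def Linv [Fintype (Qr H)] :
    (Qr H → MonoidAlgebra ℂ H) →ₗ[MonoidAlgebra ℂ H] MonoidAlgebra ℂ G where
  toFun w := ∑ q, incl H (w q) * MonoidAlgebra.single (rep H q) 1
  map_add' x y := by
    rw [← Finset.sum_add_distrib]
    refine Finset.sum_congr rfl fun q _ => ?_
    show incl H (x q + y q) * _ = _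
    rw [map_add, add_mul]
  map_smul' c w := by
    simp only [RingHom.id_apply]
    rw [smul_def, Finset.mul_sum]
    refine Finset.sum_congr rfl fun q _ => ?_
    show incl H (c * w q) * _ = _
    rw [_root_.map_mul, mul_assoc]

lemma key1 [Fintype (Qr H)] (w : Qr H → MonoidAlgebra ℂ H) (q : Qr H) :
    coord H q (Linv H w) = w q := by
  apply MonoidAlgebra.ext; apply Finsupp.ext; intro h
  rw [coord_apply]
  show (∑ q', incl H (w q') * MonoidAlgebra.single (rep H q') 1 :
      MonoidAlgebra ℂ G).coeff ((h : G) * rep H q) = _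
  rw [MonoidAlgebra.coeff_sum, Finsupp.finset_sum_apply]
  rw [Finset.sum_eq_single q]
  · rw [MonoidAlgebra.coeff_mul_single_apply, mul_inv_cancel_right, incl_apply, mul_one]
    exact Finsupp.mapDomain_apply H.subtype_injective (w q).coeff h
  · intro q' _ hq'
    rw [MonoidAlgebra.coeff_mul_single_apply]
    have hnot : (h : G) * rep H q * (rep H q')⁻¹ ∉ Set.range (H.subtype) := by
      rintro ⟨h₂, hh₂⟩
      apply hq'
      have hmem2 : rep H q * (rep H q')⁻¹ ∈ H := by
        have he2 : rep H q * (rep H q')⁻¹ = (h : G)⁻¹ * H.subtype h₂ := by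
          rw [hh₂]; group
        rw [he2]
        exact H.mul_mem (H.inv_mem h.2) h₂.2
      have hq'' := rep_eq_iff H hmem2
      rw [hq'']
      exact Quotient.out_eq q
    rw [incl_apply, Finsupp.mapDomain_notin_range _ _ hnot, zero_mul]
  · simp

lemma key2 [Fintype (Qr H)] (x : MonoidAlgebra ℂ G) :
    Linv H (fun q => coord H q x) = x := by
  apply MonoidAlgebra.ext; apply Finsupp.ext; intro g
  show (∑ q, incl H (coord H q x) * MonoidAlgebra.single (rep H q) 1 :
      MonoidAlgebra ℂ G).coeff g = x.coeff g
  rw [MonoidAlgebra.coeff_sum, Finsupp.finset_sum_apply]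
  rw [Finset.sum_eq_single (⟦g⟧ : Qr H)]
  · rw [MonoidAlgebra.coeff_mul_single_apply]
    have hmem := rep_spec H g
    have hg : g * (rep H ⟦g⟧)⁻¹ = H.subtype ⟨_, hmem⟩ := rfl
    rw [incl_apply, hg, Finsupp.mapDomain_apply H.subtype_injective, mul_one,
      coord_apply]
    congr 1
    exact inv_mul_cancel_right g (rep H ⟦g⟧)
  · intro q _ hq
    rw [MonoidAlgebra.coeff_mul_single_apply]
    have hnot : g * (rep H q)⁻¹ ∉ Set.range (H.subtype) := by
      rintro ⟨h₂, hh₂⟩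
      apply hq
      have hmem2 : g * (rep H q)⁻¹ ∈ H := by rw [← hh₂]; exact h₂.2
      exact rep_eq_iff H hmem2
    rw [incl_apply, Finsupp.mapDomain_notin_range _ _ hnot, zero_mul]
  · simp

/-- The `ℂ[H]`-linear isomorphism `ℂ[H]^(k × H\G) ≃ (ℂ[G])^k`. -/
noncomputable def Theta [Fintype (Qr H)] (k : ℕ) :
    (Fin k × Qr H → MonoidAlgebra ℂ H) ≃ₗ[MonoidAlgebra ℂ H]
      (Fin k → MonoidAlgebra ℂ G) where
  toFun w := fun i => Linv H (fun q => w (i, q))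
  map_add' x y := by
    funext i
    exact map_add (Linv H) (fun q => x (i, q)) (fun q => y (i, q))
  map_smul' c w := by
    funext i
    exact map_smul (Linv H) c (fun q => w (i, q))
  invFun v := fun iq => coord H iq.2 (v iq.1)
  left_inv w := funext fun iq => key1 H (fun q => w (iq.1, q)) iq.2
  right_inv v := funext fun i => key2 H (v i)

lemma Theta_symm_apply [Fintype (Qr H)] {k : ℕ} (v : Fin k → MonoidAlgebra ℂ G)
    (i : Fin k) (q : Qr H) : (Theta H k).symm v (i, q) = coord H q (v i) := rfl

lemma Theta_single [Fintype (Qr H)] [DecidableEq (Qr H)] {k : ℕ} (i : Fin k) (q : Qr H) :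
    Theta H k (Pi.single (i, q) 1) =
      Pi.single i (MonoidAlgebra.single (rep H q) 1) := by
  funext i'
  show Linv H (fun q' =>
      (Pi.single (i, q) 1 : Fin k × Qr H → MonoidAlgebra ℂ H) (i', q')) = _
  by_cases hi : i' = i
  · subst hi
    have h1 : (fun q' =>
        (Pi.single (i', q) 1 : Fin k × Qr H → MonoidAlgebra ℂ H) (i', q')) =
        Pi.single q (1 : MonoidAlgebra ℂ H) := by
      funext q'
      by_cases hq : q' = q
      · subst hq; simp
      · rw [Pi.single_eq_of_ne (by simp [Prod.ext_iff, hq]) 1,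
          Pi.single_eq_of_ne hq]
    rw [h1]
    show (∑ q', incl H ((Pi.single q (1 : MonoidAlgebra ℂ H) : Qr H → MonoidAlgebra ℂ H) q')
        * MonoidAlgebra.single (rep H q') 1 : MonoidAlgebra ℂ G) = _
    rw [Finset.sum_eq_single q]
    · simp
    · intro q' _ hq'
      rw [Pi.single_eq_of_ne hq', map_zero, zero_mul]
    · simp
  · have h1 : (fun q' =>
        (Pi.single (i, q) 1 : Fin k × Qr H → MonoidAlgebra ℂ H) (i', q')) =
        (0 : Qr H → MonoidAlgebra ℂ H) := by
      funext q'
      exact Pi.single_eq_of_ne (by simp [Prod.ext_iff, hi]) 1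
    rw [h1, map_zero, Pi.single_eq_of_ne hi]

lemma single_vecMul' {k : ℕ} (i : Fin k) (a : MonoidAlgebra ℂ G)
    (e : Matrix (Fin k) (Fin k) (MonoidAlgebra ℂ G)) :
    (Pi.single i a : Fin k → MonoidAlgebra ℂ G) ᵥ* e = fun j => a * e i j := by
  funext j
  show ∑ i', (Pi.single i a : Fin k → MonoidAlgebra ℂ G) i' * e i' j = _
  rw [Finset.sum_eq_single i]
  · simp
  · intro i' _ hi'; rw [Pi.single_eq_of_ne hi', zero_mul]
  · simp

lemma tau_coord (q : Qr H) (x : MonoidAlgebra ℂ G) :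
    tau (coord H q (MonoidAlgebra.single (rep H q) 1 * x)) = tau x := by
  show (MonoidAlgebra.single (rep H q) 1 * x : MonoidAlgebra ℂ G).coeff
      (((1 : H) : G) * rep H q) = x.coeff 1
  rw [MonoidAlgebra.coeff_single_mul_apply, one_mul]
  congr 1
  simp

end Construction

/-- If `H ≤ G` has finite index `N`, `e` is an idempotent matrix over `ℂ[G]`
representing the f.g. projective module `M`, and `f` is an idempotent matrix over `ℂ[H]`
representing the restriction `M|_{ℂ[H]}`, then `τ^H(f) = N · τ^G(e)`. -/
theorem statement15 {G : Type*} [Group G] (H : Subgroup G) (N : ℕ)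
    (hN : H.index = N) (hN0 : N ≠ 0)
    {k l : ℕ} (e : Matrix (Fin k) (Fin k) (MonoidAlgebra ℂ G)) (he : IsIdempotentElem e)
    (f : Matrix (Fin l) (Fin l) (MonoidAlgebra ℂ H)) (hf : IsIdempotentElem f)
    (iso : Nonempty (LinearMap.range (resVecMul H e)
      ≃ₗ[MonoidAlgebra ℂ H] LinearMap.range (vecMulLin f))) :
    ∑ i, tau (f i i) = N * ∑ i, tau (e i i) := by
  classical
  obtain ⟨φ0⟩ := iso
  haveI : Finite (G ⧸ H) := Nat.finite_of_card_ne_zero (by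
    rw [← Subgroup.index_eq_card, hN]; exact hN0)
  haveI : Finite (Qr H) :=
    Finite.of_equiv _ (QuotientGroup.quotientRightRelEquivQuotientLeftRel H).symm
  letI : Fintype (Qr H) := Fintype.ofFinite _
  have hcard : Fintype.card (Qr H) = N := by
    rw [← Nat.card_eq_fintype_card,
      Nat.card_congr (QuotientGroup.quotientRightRelEquivQuotientLeftRel H),
      ← Subgroup.index_eq_card, hN]
  let Θ := Theta (G := G) H k
  let rvm := resVecMul H e
  let p' := Θ.symm.toLinearMap ∘ₗ (rvm ∘ₗ Θ.toLinearMap)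
  have hrvm : rvm ∘ₗ rvm = rvm := LinearMap.ext fun v => by
    show (v ᵥ* e) ᵥ* e = v ᵥ* e
    rw [Matrix.vecMul_vecMul, he]
  have hp'idem : p' ∘ₗ p' = p' := by
    apply LinearMap.ext; intro v
    show Θ.symm (rvm (Θ (Θ.symm (rvm (Θ v))))) = Θ.symm (rvm (Θ v))
    rw [Θ.apply_symm_apply]
    exact congrArg Θ.symm (LinearMap.congr_fun hrvm (Θ v))
  have hvmlM : vml (matOf p') = p' := vml_matOf p'
  have hM : IsIdempotentElem (matOf p') := by
    show matOf p' * matOf p' = matOf p'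
    have h2 : vml (matOf p' * matOf p') = vml (matOf p') := by
      rw [vml_mul, hvmlM, hp'idem]
    have h3 := congrArg matOf h2
    rwa [matOf_vml, matOf_vml] at h3
  have hrange : LinearMap.range p' = (LinearMap.range rvm).map Θ.symm.toLinearMap := by
    show LinearMap.range (Θ.symm.toLinearMap ∘ₗ (rvm ∘ₗ Θ.toLinearMap)) = _
    rw [LinearMap.range_comp, LinearMap.range_comp, LinearEquiv.range, Submodule.map_top]
  let iso2 := Θ.symm.submoduleMap (LinearMap.range rvm)
  have hvf : vecMulLin f = vml f := LinearMap.ext fun v => rfl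
  let ρ : LinearMap.range (vml (matOf p')) ≃ₗ[MonoidAlgebra ℂ H] LinearMap.range (vml f) :=
    (LinearEquiv.ofEq _ _ (by rw [hvmlM, hrange])) ≪≫ₗ iso2.symm ≪≫ₗ φ0 ≪≫ₗ
      (LinearEquiv.ofEq _ _ (by rw [← hvf]))
  have main := step2 (matOf p') hM f hf ρ
  have hdiag : ∀ (i : Fin k) (q : Qr H),
      matOf p' (i, q) (i, q) = coord H q (MonoidAlgebra.single (rep H q) 1 * e i i) := by
    intro i q
    show p' (Pi.single (i, q) 1) (i, q) = _
    show Θ.symm (rvm (Θ (Pi.single (i, q) 1))) (i, q) = _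
    rw [Theta_single H i q]
    have h2 : rvm (Pi.single i (MonoidAlgebra.single (rep H q) 1)) =
        fun j => MonoidAlgebra.single (rep H q) 1 * e i j := single_vecMul' i _ e
    rw [h2]
    exact Theta_symm_apply H _ i q
  calc ∑ j, tau (f j j) = ∑ x : Fin k × Qr H, tau (matOf p' x x) := main.symm
    _ = ∑ x : Fin k × Qr H, tau (e x.1 x.1) := by
        refine Finset.sum_congr rfl fun x _ => ?_
        rw [show (x : Fin k × Qr H) = (x.1, x.2) from rfl, hdiag x.1 x.2, tau_coord]
    _ = ∑ i : Fin k, ∑ _q : Qr H, tau (e i i) := by rw [Fintype.sum_prod_type]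
    _ = ∑ i : Fin k, (N : ℂ) * tau (e i i) := by
        refine Finset.sum_congr rfl fun i _ => ?_
        rw [Finset.sum_const, Finset.card_univ, hcard, nsmul_eq_mul]
    _ = N * ∑ i, tau (e i i) := by rw [Finset.mul_sum]
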